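/- Let f, g ∈ ℂ[x₁,…,xₙ] be homogeneous of degree d with J_f = J_g, and set f_t = (1−t)f + t·g. Then the set of t ∈ ℂ for which the ℂ-span of {xⱼ·∂f_t/∂xᵢ : 1 ≤ i,j ≤ n} is a proper subspace of J_f ∩ ℂ[x₁,…,xₙ]_d is finite. -/

import Mathlib

open MvPolynomial Polynomial

noncomputable def jacobianIdeal {n : ℕ} (f : MvPolynomial (Fin n) ℂ) :
    Ideal (MvPolynomial (Fin n) ℂ) :=
  Ideal.span (Set.range fun i => pderiv i f)

/-! ### Abstract finiteness lemma -/

lemma span_ne_top_finite {V : Type*} [AddCommGroup V] [Module ℂ V] [FiniteDimensional ℂ V]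
    {ι : Type*} (v w : ι → V)
    (h0 : Submodule.span ℂ (Set.range v) = ⊤) :
    {t : ℂ | Submodule.span ℂ (Set.range fun i => v i + t • w i) ≠ ⊤}.Finite := by
  classical
  obtain ⟨σ, hσ⟩ := (Finsupp.linearCombination ℂ v).exists_rightInverse_of_surjective
    (by rw [Finsupp.range_linearCombination, h0])
  set A : V →ₗ[ℂ] V := (Finsupp.linearCombination ℂ w).comp σ with hA
  let b := Module.finBasis ℂ V
  set B := LinearMap.toMatrix b b A with hB
  set M : Matrix _ _ ℂ[X] := fun k l =>
      (if k = l then 1 else 0) + Polynomial.C (B k l) * Polynomial.X with hM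
  set p : ℂ[X] := M.det with hp
  have hMev : ∀ t : ℂ, M.map (eval t) = 1 + t • B := by
    intro t
    ext k l
    rw [Matrix.map_apply]
    simp [hM, Matrix.one_apply, mul_comm t, apply_ite (eval t)]
  have hpev : ∀ t : ℂ, p.eval t = (1 + t • B).det := by
    intro t
    rw [← hMev t, hp]
    exact (RingHom.map_det (evalRingHom t) M)
  have hpne : p ≠ 0 := by
    intro h
    have := hpev 0
    simp [h] at this
  apply (Polynomial.finite_setOf_isRoot hpne).subset
  intro t ht
  simp only [Set.mem_setOf_eq] at ht ⊢
  by_contra hroot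
  apply ht
  have hdet : IsUnit (1 + t • B).det := by
    rw [← hpev t]
    exact isUnit_iff_ne_zero.mpr hroot
  have hsurj : Function.Surjective (LinearMap.id + t • A : V →ₗ[ℂ] V) := by
    have h1 : Matrix.toLin b b (1 + t • B) = LinearMap.id + t • A := by
      rw [map_add, map_smul, hB, Matrix.toLin_toMatrix, Matrix.toLin_one]
    have := Matrix.range_toLin_eq_top b (1 + t • B) hdet
    rw [h1, LinearMap.range_eq_top] at this
    exact this
  have hcomp : (Finsupp.linearCombination ℂ (fun i => v i + t • w i)).comp σ
      = LinearMap.id + t • A := by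
    have hcomb : (Finsupp.linearCombination ℂ (fun i => v i + t • w i) : (ι →₀ ℂ) →ₗ[ℂ] V)
        = Finsupp.linearCombination ℂ v + t • Finsupp.linearCombination ℂ w := by
      apply Finsupp.lhom_ext'
      intro i
      ext
      simp [Finsupp.linearCombination_single, smul_comm t]
    rw [hcomb, LinearMap.add_comp, LinearMap.smul_comp, hσ, hA]
  rw [← top_le_iff, ← Finsupp.range_linearCombination]
  intro x _
  obtain ⟨y, hy⟩ := hsurj x
  exact ⟨σ y, by rw [← hy, ← hcomp]; rfl⟩

/-! ### Homogeneity lemmas -/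

lemma degree_of_coeff_ne_zero {n e : ℕ} {f : MvPolynomial (Fin n) ℂ} (hf : f.IsHomogeneous e)
    {s : Fin n →₀ ℕ} (hs : coeff s f ≠ 0) : s.degree = e := by
  have := hf hs
  rwa [Finsupp.degree_eq_weight_one]

lemma pderiv_zero_of_hom0 {n : ℕ} {f : MvPolynomial (Fin n) ℂ} (hf : f.IsHomogeneous 0)
    (i : Fin n) : pderiv i f = 0 := by
  conv_lhs => rw [← f.support_sum_monomial_coeff]
  rw [map_sum]
  apply Finset.sum_eq_zero
  intro s hs
  have h0 : s = 0 := (Finsupp.degree_eq_zero_iff s).mp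
    (degree_of_coeff_ne_zero hf (mem_support_iff.mp hs))
  subst h0
  simp [pderiv_monomial]

lemma pderiv_isHomogeneous {n d : ℕ} {f : MvPolynomial (Fin n) ℂ} (hf : f.IsHomogeneous d)
    (i : Fin n) : (pderiv i f).IsHomogeneous (d - 1) := by
  conv_lhs => rw [← f.support_sum_monomial_coeff]
  rw [map_sum]
  apply IsHomogeneous.sum
  intro s hs
  rw [pderiv_monomial]
  by_cases h : s i = 0
  · simp only [h, Nat.cast_zero, mul_zero, map_zero]
    exact isHomogeneous_zero _ _ _
  · apply isHomogeneous_monomial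
    have hd : s.degree = d := degree_of_coeff_ne_zero hf (mem_support_iff.mp hs)
    have hkey : (s - Finsupp.single i 1) + Finsupp.single i 1 = s := by
      ext j
      simp only [Finsupp.add_apply, Finsupp.tsub_apply, Finsupp.single_apply]
      rcases eq_or_ne i j with rfl | hij
      · simp only [if_true, eq_self_iff_true]
        omega
      · simp [hij]
    have hdeg := congrArg Finsupp.degree hkey
    rw [Finsupp.degree_eq_weight_one] at hdeg ⊢
    rw [map_add] at hdeg
    have hsing : (Finsupp.weight 1) (Finsupp.single i 1) = 1 := by
      simp [Finsupp.weight_apply, Finsupp.sum_single_index]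
    rw [Finsupp.degree_eq_weight_one] at hd
    have hsing' : (Finsupp.weight fun _ : Fin n => (1:ℕ)) (Finsupp.single i 1) = 1 := hsing
    omega

lemma X_mul_isHomogeneous {n d : ℕ} {f : MvPolynomial (Fin n) ℂ} (hf : f.IsHomogeneous d)
    (i j : Fin n) : (X j * pderiv i f).IsHomogeneous d := by
  rcases Nat.eq_zero_or_pos d with rfl | hd
  · rw [pderiv_zero_of_hom0 hf, mul_zero]
    exact isHomogeneous_zero _ _ _
  · have := (isHomogeneous_X ℂ j).mul (pderiv_isHomogeneous hf i)
    have h1 : 1 + (d - 1) = d := by omega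
    rwa [h1] at this

lemma degree_one_exists {n : ℕ} {s : Fin n →₀ ℕ} (h : s.degree = 1) :
    ∃ j, s = Finsupp.single j 1 := by
  classical
  have hne : s.support.Nonempty := by
    rw [Finset.nonempty_iff_ne_empty]
    intro h0
    rw [Finsupp.degree_apply, h0] at h
    simp at h
  obtain ⟨j, hj⟩ := hne
  refine ⟨j, ?_⟩
  have hj1 : 1 ≤ s j := Nat.one_le_iff_ne_zero.mpr (Finsupp.mem_support_iff.mp hj)
  have hle : s j ≤ s.degree := Finsupp.le_degree j s
  have hsj : s j = 1 := le_antisymm (h ▸ hle) hj1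
  ext k
  rcases eq_or_ne k j with rfl | hk
  · simp [hsj]
  · simp only [Finsupp.single_apply, if_neg (Ne.symm hk)]
    by_contra hk0
    have hks : k ∈ s.support := Finsupp.mem_support_iff.mpr hk0
    have hsub : ({j, k} : Finset (Fin n)) ⊆ s.support := by
      intro x hx
      simp only [Finset.mem_insert, Finset.mem_singleton] at hx
      rcases hx with rfl | rfl <;> assumption
    have h2 : s j + s k ≤ s.degree := by
      rw [Finsupp.degree_apply, ← Finset.sum_pair (Ne.symm hk)]
      exact Finset.sum_le_sum_of_subset hsub
    omega

lemma hom1_mul_mem_span {n : ℕ} {h q : MvPolynomial (Fin n) ℂ} (hh : h.IsHomogeneous 1)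
    (S : Set (MvPolynomial (Fin n) ℂ)) (hS : ∀ j : Fin n, X j * q ∈ S) :
    h * q ∈ Submodule.span ℂ S := by
  rw [← h.support_sum_monomial_coeff, Finset.sum_mul]
  apply Submodule.sum_mem
  intro s hs
  obtain ⟨j, rfl⟩ := degree_one_exists (degree_of_coeff_ne_zero hh (mem_support_iff.mp hs))
  have hXj : (MvPolynomial.monomial (Finsupp.single j 1)) (coeff (Finsupp.single j 1) h)
      = (coeff (Finsupp.single j 1) h) • (X j : MvPolynomial (Fin n) ℂ) := by
    rw [show (X j : MvPolynomial (Fin n) ℂ) = MvPolynomial.monomial (Finsupp.single j 1) 1 from rfl,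
      MvPolynomial.smul_monomial, smul_eq_mul, mul_one]
  rw [hXj, smul_mul_assoc]
  exact Submodule.smul_mem _ _ (Submodule.subset_span (hS j))

lemma comp_mul_mem_span {n e : ℕ} {q : MvPolynomial (Fin n) ℂ} (hq : q.IsHomogeneous e)
    (c : MvPolynomial (Fin n) ℂ) (S : Set (MvPolynomial (Fin n) ℂ))
    (hS : ∀ j : Fin n, X j * q ∈ S) :
    homogeneousComponent (e + 1) (c * q) ∈ Submodule.span ℂ S := by
  rw [← sum_homogeneousComponent c, Finset.sum_mul, map_sum]
  apply Submodule.sum_mem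
  intro k _
  have hmem : homogeneousComponent k c * q ∈ homogeneousSubmodule (Fin n) ℂ (k + e) :=
    (homogeneousComponent_isHomogeneous k c).mul hq
  rw [homogeneousComponent_of_mem hmem]
  split_ifs with hke
  · have hk1 : k = 1 := by omega
    subst hk1
    exact hom1_mul_mem_span (homogeneousComponent_isHomogeneous 1 c) S hS
  · exact Submodule.zero_mem _

lemma span_X_mul_pderiv {n d : ℕ} {f : MvPolynomial (Fin n) ℂ} (hf : f.IsHomogeneous d) :
    Submodule.span ℂ (Set.range fun ij : Fin n × Fin n => X ij.2 * pderiv ij.1 f)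
      = Submodule.restrictScalars ℂ (jacobianIdeal f) ⊓ homogeneousSubmodule (Fin n) ℂ d := by
  apply le_antisymm
  · rw [Submodule.span_le]
    rintro p ⟨⟨i, j⟩, rfl⟩
    exact ⟨Ideal.mul_mem_left _ _ (Ideal.subset_span ⟨i, rfl⟩), X_mul_isHomogeneous hf i j⟩
  · intro p hp
    rw [Submodule.mem_inf] at hp
    obtain ⟨hp1, hp2⟩ := hp
    have hp1' : p ∈ Ideal.span (Set.range fun i => pderiv i f) := hp1
    obtain ⟨c, hc⟩ := Ideal.mem_span_range_iff_exists_fun.mp hp1'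
    rcases Nat.eq_zero_or_pos d with rfl | hd
    · have hzero : p = 0 := by
        rw [← hc]
        simp [pderiv_zero_of_hom0 hf]
      rw [hzero]
      exact Submodule.zero_mem _
    · have hpc : homogeneousComponent d p = p := by
        rw [homogeneousComponent_of_mem hp2, if_pos rfl]
      rw [← hpc, ← hc, map_sum]
      apply Submodule.sum_mem
      intro i _
      have he : d - 1 + 1 = d := by omega
      have hmem := comp_mul_mem_span (pderiv_isHomogeneous hf i) (c i)
        (Set.range fun ij : Fin n × Fin n => X ij.2 * pderiv ij.1 f)
        (fun j => ⟨(i, j), rfl⟩)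
      rwa [he] at hmem

/-! ### Main theorem -/

theorem span_proper_finite {n d : ℕ} (f g : MvPolynomial (Fin n) ℂ)
    (hf : f.IsHomogeneous d) (hg : g.IsHomogeneous d)
    (hJ : jacobianIdeal f = jacobianIdeal g) :
    {t : ℂ | Submodule.span ℂ
        {p : MvPolynomial (Fin n) ℂ | ∃ i j, p = X j * pderiv i ((1 - t) • f + t • g)} <
      Submodule.restrictScalars ℂ (jacobianIdeal f) ⊓
        homogeneousSubmodule (Fin n) ℂ d}.Finite := by
  classical
  set V : Submodule ℂ (MvPolynomial (Fin n) ℂ) :=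
    Submodule.restrictScalars ℂ (jacobianIdeal f) ⊓ homogeneousSubmodule (Fin n) ℂ d with hV
  set a : Fin n × Fin n → MvPolynomial (Fin n) ℂ :=
    (fun ij => X ij.2 * pderiv ij.1 f) with haa
  set b : Fin n × Fin n → MvPolynomial (Fin n) ℂ :=
    (fun ij => X ij.2 * pderiv ij.1 g) with hbb
  have ha : ∀ ij, a ij ∈ V := fun ij =>
    ⟨Ideal.mul_mem_left _ _ (Ideal.subset_span ⟨ij.1, rfl⟩), X_mul_isHomogeneous hf ij.1 ij.2⟩
  have hb : ∀ ij, b ij ∈ V := fun ij =>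
    ⟨by
      have hmem : pderiv ij.1 g ∈ jacobianIdeal g := Ideal.subset_span ⟨ij.1, rfl⟩
      rw [← hJ] at hmem
      exact Ideal.mul_mem_left _ _ hmem,
     X_mul_isHomogeneous hg ij.1 ij.2⟩
  have hVfin : FiniteDimensional ℂ V := by
    have hle : V ≤ restrictTotalDegree (Fin n) ℂ d := by
      intro p hp
      rw [mem_restrictTotalDegree]
      exact hp.2.totalDegree_le
    exact Submodule.finiteDimensional_of_le hle
  set v : Fin n × Fin n → V := fun ij => ⟨a ij, ha ij⟩ with hv
  set w : Fin n × Fin n → V := fun ij => ⟨b ij - a ij, sub_mem (hb ij) (ha ij)⟩ with hw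
  have hspan0 : Submodule.span ℂ (Set.range a) = V := span_X_mul_pderiv hf
  have hvtop : Submodule.span ℂ (Set.range v) = ⊤ := by
    apply Submodule.map_injective_of_injective V.injective_subtype
    rw [Submodule.map_span, Submodule.map_top, Submodule.range_subtype, ← Set.range_comp]
    exact hspan0
  apply (span_ne_top_finite v w hvtop).subset
  intro t ht
  simp only [Set.mem_setOf_eq] at ht ⊢
  intro htop
  refine absurd ?_ ht.ne
  have hcalc : ∀ i j : Fin n, X j * pderiv i ((1 - t) • f + t • g)
      = a (i, j) + t • (b (i, j) - a (i, j)) := by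
    intro i j
    rw [Derivation.map_add, Derivation.map_smul, Derivation.map_smul, mul_add, mul_smul_comm, mul_smul_comm]
    simp only [haa, hbb]
    module
  have hset : {p : MvPolynomial (Fin n) ℂ | ∃ i j, p = X j * pderiv i ((1 - t) • f + t • g)}
      = Set.range fun ij : Fin n × Fin n => a ij + t • (b ij - a ij) := by
    ext p
    simp only [Set.mem_setOf_eq, Set.mem_range, Prod.exists]
    constructor
    · rintro ⟨i, j, rfl⟩
      exact ⟨i, j, (hcalc i j).symm⟩
    · rintro ⟨i, j, rfl⟩
      exact ⟨i, j, (hcalc i j).symm⟩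
  rw [hset,
    show (fun ij : Fin n × Fin n => a ij + t • (b ij - a ij))
      = V.subtype ∘ (fun ij => v ij + t • w ij) from rfl,
    Set.range_comp, ← Submodule.map_span, htop, Submodule.map_top, Submodule.range_subtype]
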